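/- Let 1 < p < p′ < ∞ and set Y = {f ∈ L^{p,∞}(ℝⁿ) : f ∈ L^{p′}(ℝⁿ)}. Then for every ε > 0 and every f ∈ BC([0,∞); L̃^{p,∞}(ℝⁿ)) there exists f_ε ∈ BC([0,∞); Y) with sup_{s ≥ 0} ‖f(s) - f_ε(s)‖_{p,∞} < ε; that is, BC([0,∞); Y) is dense in BC([0,∞); L̃^{p,∞}(ℝⁿ)). -/

import Mathlib

open MeasureTheory Real Filter Topology ENNReal

noncomputable section

abbrev Rn (n : ℕ) := EuclideanSpace ℝ (Fin n)

/-- The weak `L^p` quasi-norm `sup_{λ>0} λ · |{|f| > λ}|^{1/p}`. -/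
def wk {n : ℕ} {α : Type*} [NormedAddCommGroup α] (p : ℝ) (f : Rn n → α) : ℝ≥0∞ :=
  ⨆ l : NNReal, (l : ℝ≥0∞) * (volume {x : Rn n | (l : ℝ) < ‖f x‖}) ^ (1 / p)

/-- The Gaussian heat kernel on `ℝⁿ`. -/
def heatKernel (n : ℕ) (t : ℝ) (x : Rn n) : ℝ :=
  (4 * π * t) ^ (-(n : ℝ) / 2) * Real.exp (-‖x‖ ^ 2 / (4 * t))

/-- The heat semigroup `e^{tΔ}` acting by convolution with the Gaussian kernel. -/
def heat {n : ℕ} {α : Type*} [NormedAddCommGroup α] [NormedSpace ℝ α] (t : ℝ)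
    (f : Rn n → α) : Rn n → α :=
  fun x => ∫ y, heatKernel n t (x - y) • f y

/-- Fourier multiplier with real symbol `m`, acting on real valued functions. -/
def fourierMul {n : ℕ} (m : Rn n → ℝ) (f : Rn n → ℝ) : Rn n → ℝ :=
  fun x => (FourierTransformInv.fourierInv
    (fun ξ => (m ξ : ℂ) * FourierTransform.fourier (fun y => (f y : ℂ)) ξ) x).re

/-- The Leray–Helmholtz projection `ℙ = (δ_{jk} + R_j R_k)_{j,k}` via Fourier multipliers. -/
def leray {n : ℕ} (f : Rn n → Fin n → ℝ) : Rn n → Fin n → ℝ :=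
  fun x j => ∑ k, fourierMul
    (fun ξ => (if j = k then (1 : ℝ) else 0) - ξ j * ξ k / ‖ξ‖ ^ 2) (fun y => f y k) x

/-- The `j`-th standard basis vector. -/
def eV (n : ℕ) (j : Fin n) : Rn n := EuclideanSpace.single j 1

/-- A vector field is solenoidal (divergence free). -/
def Solenoidal {n : ℕ} (f : Rn n → Fin n → ℝ) : Prop :=
  ∀ x, ∑ j, fderiv ℝ (fun y => f y j) x (eV n j) = 0

/-- The componentwise Laplacian. -/
def lap {n : ℕ} (f : Rn n → Fin n → ℝ) : Rn n → Fin n → ℝ :=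
  fun x k => ∑ j, fderiv ℝ (fun y => fderiv ℝ (fun z => f z k) y (eV n j)) x (eV n j)

/-- Membership in `X_σ^{n,∞}`, the closure of `D(-Δ) = {u ∈ L_σ^{n,∞} : Δu ∈ L^{n,∞}}`
in the weak-`L^n` norm. -/
def MemX {n : ℕ} (u : Rn n → Fin n → ℝ) : Prop :=
  ∀ ε : ℝ, 0 < ε → ∃ v : Rn n → Fin n → ℝ, Solenoidal v ∧ wk (n : ℝ) v < ⊤ ∧
    wk (n : ℝ) (lap v) < ⊤ ∧ wk (n : ℝ) (u - v) < ENNReal.ofReal ε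

/-- Membership in `L̃^{p,∞}`, the closure of `L^{p,∞} ∩ L^∞` in the weak-`L^p` norm. -/
def MemTilde {n : ℕ} {α : Type*} [NormedAddCommGroup α] (p : ℝ) (u : Rn n → α) : Prop :=
  ∀ ε : ℝ, 0 < ε → ∃ v : Rn n → α, wk p v < ⊤ ∧ eLpNorm v ⊤ volume < ⊤ ∧
    wk p (u - v) < ENNReal.ofReal ε

/-- Membership in `L̃_σ^{n,∞}`, the closure of `L_σ^{n,∞} ∩ L^∞` in the weak-`L^n` norm. -/
def MemTildeSigma {n : ℕ} (u : Rn n → Fin n → ℝ) : Prop :=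
  ∀ ε : ℝ, 0 < ε → ∃ v : Rn n → Fin n → ℝ, Solenoidal v ∧ wk (n : ℝ) v < ⊤ ∧
    eLpNorm v ⊤ volume < ⊤ ∧ wk (n : ℝ) (u - v) < ENNReal.ofReal ε

/-- `BCOn N I u` : the `X`-valued curve `u` is bounded on `I` and continuous on `I`
with respect to the (quasi-)norm functional `N`. -/
def BCOn {n : ℕ} {α : Type*} [NormedAddCommGroup α] (N : (Rn n → α) → ℝ≥0∞)
    (I : Set ℝ) (u : ℝ → Rn n → α) : Prop :=
  (∃ C : ℝ≥0∞, C < ⊤ ∧ ∀ t ∈ I, N (u t) ≤ C) ∧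
  ∀ t ∈ I, Tendsto (fun s => N (u s - u t)) (nhdsWithin t I) (nhds 0)

/-- Duhamel term `∫₀ᵗ e^{(t-s)Δ} ℙ f(s) ds`. -/
def duhamelPF {n : ℕ} (f : ℝ → Rn n → Fin n → ℝ) (t : ℝ) : Rn n → Fin n → ℝ :=
  fun x k => ∫ s in Set.Ioc (0 : ℝ) t, heat (t - s) (leray (f s)) x k

/-- Duhamel term `∫₀ᵗ ℙ e^{(t-s)Δ} f(s) ds`. -/
def duhamelFP {n : ℕ} (f : ℝ → Rn n → Fin n → ℝ) (t : ℝ) : Rn n → Fin n → ℝ :=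
  fun x k => ∫ s in Set.Ioc (0 : ℝ) t, leray (heat (t - s) (f s)) x k

/-- The tensor product `u ⊗ v`. -/
def tens {n : ℕ} (u v : Rn n → Fin n → ℝ) : Rn n → Fin n → Fin n → ℝ :=
  fun x j k => u x j * v x k

/-- The Leray projection applied to the rows of a matrix-valued function. -/
def lerayM {n : ℕ} (F : Rn n → Fin n → Fin n → ℝ) : Rn n → Fin n → Fin n → ℝ :=
  fun x j k => leray (fun y => F y j) x k

/-- Nonlinear Duhamel term `∫₀ᵗ ∇·e^{(t-s)Δ} ℙ (u⊗u)(s) ds` (weak mild form). -/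
def nonlinWeak {n : ℕ} (u : ℝ → Rn n → Fin n → ℝ) (t : ℝ) : Rn n → Fin n → ℝ :=
  fun x k => ∫ s in Set.Ioc (0 : ℝ) t,
    ∑ j, fderiv ℝ (fun y => heat (t - s) (lerayM (tens (u s) (u s))) y j k) x (eV n j)

/-- The convection term `u · ∇v`. -/
def convTerm {n : ℕ} (u v : Rn n → Fin n → ℝ) : Rn n → Fin n → ℝ :=
  fun x k => ∑ j, u x j * fderiv ℝ (fun y => v y k) x (eV n j)

/-- Nonlinear Duhamel term `∫₀ᵗ e^{(t-s)Δ} ℙ [u·∇u](s) ds` (mild form). -/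
def nonlinMild {n : ℕ} (u : ℝ → Rn n → Fin n → ℝ) (t : ℝ) : Rn n → Fin n → ℝ :=
  fun x k => ∫ s in Set.Ioc (0 : ℝ) t, heat (t - s) (leray (convTerm (u s) (u s))) x k

/-- Weak mild solution (integral equation IE*, with `e^{(t-s)Δ}ℙf`). -/
def IsWeakMildPF {n : ℕ} (a : Rn n → Fin n → ℝ) (f u : ℝ → Rn n → Fin n → ℝ)
    (I : Set ℝ) : Prop :=
  ∀ t ∈ I, ∀ x, u t x = heat t a x + duhamelPF f t x - nonlinWeak u t x

/-- Weak mild solution (integral equation IE**, with `ℙe^{(t-s)Δ}f`, used when `n = 3`). -/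
def IsWeakMildFP {n : ℕ} (a : Rn n → Fin n → ℝ) (f u : ℝ → Rn n → Fin n → ℝ)
    (I : Set ℝ) : Prop :=
  ∀ t ∈ I, ∀ x, u t x = heat t a x + duhamelFP f t x - nonlinWeak u t x

/-- Mild solution (integral equation IE, with convection form nonlinearity). -/
def IsMild {n : ℕ} (a : Rn n → Fin n → ℝ) (f u : ℝ → Rn n → Fin n → ℝ)
    (I : Set ℝ) : Prop :=
  ∀ t ∈ I, ∀ x, u t x = heat t a x + duhamelPF f t x - nonlinMild u t x

end

noncomputable section

namespace Stmt5Aux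

/-- truncation at level `M`. -/
def trunc (M y : ℝ) : ℝ := max (min y M) (-M)

lemma trunc_eq {M y : ℝ} (h : |y| ≤ M) : trunc M y = y := by
  rw [abs_le] at h
  simp [trunc, min_eq_left h.2, max_eq_left h.1]

lemma abs_trunc_le {M : ℝ} (hM : 0 ≤ M) (y : ℝ) : |trunc M y| ≤ M := by
  unfold trunc
  rw [abs_le]
  exact ⟨le_max_right _ _, max_le (min_le_right _ _) (by linarith)⟩

lemma abs_trunc_le_abs {M : ℝ} (hM : 0 ≤ M) (y : ℝ) : |trunc M y| ≤ |y| := by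
  rcases le_or_gt |y| M with h | h
  · rw [trunc_eq h]
  · exact (abs_trunc_le hM y).trans h.le

lemma abs_sub_trunc_eq {M : ℝ} (hM : 0 ≤ M) (y : ℝ) :
    |y - trunc M y| = max (|y| - M) 0 := by
  unfold trunc
  rcases le_total M y with h | h
  · rw [min_eq_right h, max_eq_left (by linarith), abs_of_nonneg (by linarith : 0 ≤ y - M),
      abs_of_nonneg (by linarith : (0:ℝ) ≤ y), max_eq_left (by linarith)]
  rcases le_total (-M) y with h' | h'
  · rw [min_eq_left h, max_eq_left h', sub_self, abs_zero,
      max_eq_right (by linarith [abs_le.mpr ⟨h', h⟩] : |y| - M ≤ 0)]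
  · rw [min_eq_left h, max_eq_right h', abs_of_nonpos (by linarith : y - -M ≤ 0),
      abs_of_nonpos (by linarith : y ≤ 0), max_eq_left (by linarith)]
    ring

lemma sub_trunc_anti {M M' : ℝ} (h0 : 0 ≤ M) (h : M ≤ M') (y : ℝ) :
    |y - trunc M' y| ≤ |y - trunc M y| := by
  rw [abs_sub_trunc_eq (le_trans h0 h), abs_sub_trunc_eq h0]
  exact max_le_max (by linarith) le_rfl

lemma abs_sub_trunc_le_abs {M : ℝ} (hM : 0 ≤ M) (y : ℝ) : |y - trunc M y| ≤ |y| := by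
  rw [abs_sub_trunc_eq hM]
  exact max_le (by linarith [abs_nonneg y]) (abs_nonneg y)

lemma trunc_lipschitz {M : ℝ} (y z : ℝ) :
    |trunc M y - trunc M z| ≤ |y - z| := by
  unfold trunc
  calc |max (min y M) (-M) - max (min z M) (-M)| ≤ |min y M - min z M| :=
        abs_max_sub_max_le_abs _ _ _
    _ ≤ |y - z| := (abs_min_sub_min_le_max ..).trans (by simp)

lemma trunc_diff_le {M M' : ℝ} (y : ℝ) : |trunc M y - trunc M' y| ≤ 2 * |M - M'| := by
  unfold trunc
  have h1 : |max (min y M) (-M) - max (min y M') (-M)| ≤ |min y M - min y M'| :=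
    abs_max_sub_max_le_abs _ _ _
  have h2 : |min y M - min y M'| ≤ |M - M'| := (abs_min_sub_min_le_max ..).trans (by simp)
  have h3 : |max (min y M') (-M) - max (min y M') (-M')| ≤ |(-M) - (-M')| :=
    (abs_max_sub_max_le_max ..).trans (by simp)
  have h4 : |(-M) - (-M')| = |M - M'| := by rw [← abs_neg]; ring_nf
  calc |max (min y M) (-M) - max (min y M') (-M')|
      ≤ |max (min y M) (-M) - max (min y M') (-M)| +
        |max (min y M') (-M) - max (min y M') (-M')| := abs_sub_le _ _ _
    _ ≤ |M - M'| + |M - M'| := add_le_add (h1.trans h2) (h3.trans_eq h4)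
    _ = 2 * |M - M'| := by ring

lemma trunc_eq_trunc {M M' y : ℝ} (h : |y| ≤ M) (h' : |y| ≤ M') :
    trunc M y = trunc M' y := by rw [trunc_eq h, trunc_eq h']

lemma sub_trunc_le_two_mul {K M : ℝ} (hK : 0 ≤ K) (hM : 2 * K ≤ M) {v : ℝ} (hv : |v| ≤ K)
    (y : ℝ) : |y - trunc M y| ≤ 2 * |y - v| := by
  rw [abs_sub_trunc_eq (by linarith)]
  rcases le_total |y| M with h | h
  · exact max_le (by linarith [abs_nonneg (y - v)]) (by positivity)
  · have h5 : |y| - |v| ≤ |y - v| := abs_sub_abs_le_abs_sub y v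
    exact max_le (by linarith) (by positivity)

variable {n : ℕ} {α : Type*} [NormedAddCommGroup α]

lemma le_wk (p : ℝ) (f : Rn n → α) (l : NNReal) :
    (l : ℝ≥0∞) * (volume {x : Rn n | (l : ℝ) < ‖f x‖}) ^ (1 / p) ≤ wk p f :=
  le_iSup (fun l : NNReal => (l : ℝ≥0∞) * (volume {x : Rn n | (l : ℝ) < ‖f x‖}) ^ (1 / p)) l

lemma wk_le_mul {p : ℝ} (hp : 0 ≤ p) {a b : Rn n → α} (c : NNReal) (hc : c ≠ 0)
    (h : ∀ᵐ x ∂(volume : Measure (Rn n)), ‖a x‖ ≤ c * ‖b x‖) :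
    wk p a ≤ (c : ℝ≥0∞) * wk p b := by
  refine iSup_le fun l => ?_
  have hsub : volume {x : Rn n | (l : ℝ) < ‖a x‖} ≤
      volume {x : Rn n | ((l / c : NNReal) : ℝ) < ‖b x‖} := by
    refine measure_mono_ae ?_
    filter_upwards [h] with x hx hlx
    have hc' : (0:ℝ) < c := by exact_mod_cast hc.bot_lt
    have hlx' : (l : ℝ) < ‖a x‖ := hlx
    show ((l / c : NNReal) : ℝ) < ‖b x‖
    rw [NNReal.coe_div, div_lt_iff₀ hc']
    calc (l : ℝ) < ‖a x‖ := hlx'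
      _ ≤ c * ‖b x‖ := hx
      _ = ‖b x‖ * c := mul_comm _ _
  have hl : (l : ℝ≥0∞) = (c : ℝ≥0∞) * ((l / c : NNReal) : ℝ≥0∞) := by
    rw [← ENNReal.coe_mul]
    congr 1
    rw [mul_comm, div_mul_cancel₀ _ hc]
  calc (l : ℝ≥0∞) * (volume {x : Rn n | (l : ℝ) < ‖a x‖}) ^ (1 / p)
      ≤ (c : ℝ≥0∞) * (((l / c : NNReal) : ℝ≥0∞) *
        (volume {x : Rn n | ((l / c : NNReal) : ℝ) < ‖b x‖}) ^ (1 / p)) := by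
        rw [hl, mul_assoc]
        gcongr
    _ ≤ (c : ℝ≥0∞) * wk p b := by gcongr; exact le_wk p b _

lemma wk_mono_ae {p : ℝ} (hp : 0 ≤ p) {a b : Rn n → α}
    (h : ∀ᵐ x ∂(volume : Measure (Rn n)), ‖a x‖ ≤ ‖b x‖) : wk p a ≤ wk p b := by
  have := wk_le_mul hp (a := a) (b := b) 1 one_ne_zero (by simpa using h)
  simpa using this

lemma wk_add_le {p : ℝ} (hp : 1 ≤ p) (a b : Rn n → ℝ) :
    wk p (fun x => a x + b x) ≤ 2 * (wk p a + wk p b) := by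
  refine iSup_le fun l => ?_
  set A := {x : Rn n | ((l / 2 : NNReal) : ℝ) < ‖a x‖} with hA_def
  set B := {x : Rn n | ((l / 2 : NNReal) : ℝ) < ‖b x‖} with hB_def
  have h2 : ((l / 2 : NNReal) : ℝ) = (l : ℝ) / 2 := by
    rw [NNReal.coe_div]; norm_num
  have hsub : {x : Rn n | (l : ℝ) < ‖a x + b x‖} ⊆ A ∪ B := by
    intro x hx
    have hx' : (l : ℝ) < ‖a x + b x‖ := hx
    by_contra hAB
    have hA : ¬ (((l / 2 : NNReal) : ℝ) < ‖a x‖) := fun h => hAB (Or.inl h)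
    have hB : ¬ (((l / 2 : NNReal) : ℝ) < ‖b x‖) := fun h => hAB (Or.inr h)
    rw [not_lt, h2] at hA hB
    have := norm_add_le (a x) (b x)
    linarith
  have hp0 : 0 ≤ 1 / p := div_nonneg zero_le_one (by linarith)
  have hp1 : 1 / p ≤ 1 := by
    rw [div_le_one (by linarith)]; linarith
  calc (l : ℝ≥0∞) * (volume {x : Rn n | (l : ℝ) < ‖a x + b x‖}) ^ (1 / p)
      ≤ (l : ℝ≥0∞) * (volume A + volume B) ^ (1 / p) := by
        gcongr
        exact (measure_mono hsub).trans (measure_union_le A B)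
    _ ≤ (l : ℝ≥0∞) * ((volume A) ^ (1 / p) + (volume B) ^ (1 / p)) := by
        gcongr
        exact ENNReal.rpow_add_le_add_rpow _ _ hp0 hp1
    _ = 2 * (((l / 2 : NNReal) : ℝ≥0∞) * (volume A) ^ (1 / p) +
        ((l / 2 : NNReal) : ℝ≥0∞) * (volume B) ^ (1 / p)) := by
        have hl : (l : ℝ≥0∞) = 2 * ((l / 2 : NNReal) : ℝ≥0∞) := by
          rw [show ((l / 2 : NNReal) : ℝ≥0∞) = (l : ℝ≥0∞) / 2 by
            rw [ENNReal.coe_div (by norm_num)]; norm_num]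
          rw [ENNReal.mul_div_cancel' (by norm_num) (by norm_num)]
        rw [hl]; ring
    _ ≤ 2 * (wk p a + wk p b) := by
        gcongr
        · exact le_wk p a _
        · exact le_wk p b _

lemma wk_le_of_support {p : ℝ} (hp : 0 < p) {a : Rn n → α} {δ : ℝ} (hδ : 0 ≤ δ)
    {S : Set (Rn n)} (h1 : ∀ x, ‖a x‖ ≤ δ) (h2 : ∀ x, a x ≠ 0 → x ∈ S) :
    wk p a ≤ ENNReal.ofReal δ * (volume S) ^ (1 / p) := by
  refine iSup_le fun l => ?_
  rcases Set.eq_empty_or_nonempty {x : Rn n | (l : ℝ) < ‖a x‖} with hE | hE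
  · rw [hE, measure_empty, ENNReal.zero_rpow_of_pos (by positivity : (0:ℝ) < 1 / p), mul_zero]
    exact zero_le
  · obtain ⟨x₀, hx₀⟩ := hE
    have hx₀' : (l : ℝ) < ‖a x₀‖ := hx₀
    have hlδ : (l : ℝ) < δ := lt_of_lt_of_le hx₀' (h1 x₀)
    have hsub : {x : Rn n | (l : ℝ) < ‖a x‖} ⊆ S := by
      intro x hx
      have hx' : (l : ℝ) < ‖a x‖ := hx
      refine h2 x fun h0 => ?_
      rw [h0, norm_zero] at hx'
      exact absurd hx' (not_lt.mpr l.coe_nonneg)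
    refine mul_le_mul' ?_ (ENNReal.rpow_le_rpow (measure_mono hsub) (by positivity)) 
    rw [← ENNReal.ofReal_coe_nnreal]
    exact ENNReal.ofReal_le_ofReal hlδ.le

lemma eLpNorm_interp {p p' : ℝ} (hp : 1 < p) (hpp : p < p') {g : Rn n → ℝ}
    {M : ℝ} (hM : 1 ≤ M) (hb : ∀ x, ‖g x‖ ≤ M) {C : ℝ≥0∞} (hC : C ≠ ⊤)
    (hwk : wk p g ≤ C) : eLpNorm g (ENNReal.ofReal p') volume < ⊤ := by
  have hp0 : (0:ℝ) < p := by linarith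
  have hp'0 : (0:ℝ) < p' := by linarith
  have hM0 : (0:ℝ) < M := by linarith
  -- distribution bound
  have hvol : ∀ l : NNReal, l ≠ 0 →
      volume {x : Rn n | (l : ℝ) < ‖g x‖} ≤ (C / l) ^ p := by
    intro l hl
    have h1 : (l : ℝ≥0∞) * (volume {x : Rn n | (l : ℝ) < ‖g x‖}) ^ (1 / p) ≤ C :=
      (le_wk p g l).trans hwk
    have h2 : (volume {x : Rn n | (l : ℝ) < ‖g x‖}) ^ (1 / p) ≤ C / l := by
      rw [ENNReal.le_div_iff_mul_le (Or.inl (by exact_mod_cast hl)) (Or.inl ENNReal.coe_ne_top)]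
      rwa [mul_comm]
    calc volume {x : Rn n | (l : ℝ) < ‖g x‖}
        = ((volume {x : Rn n | (l : ℝ) < ‖g x‖}) ^ (1 / p)) ^ p := by
          rw [← ENNReal.rpow_mul, one_div_mul_cancel hp0.ne', ENNReal.rpow_one]
      _ ≤ (C / l) ^ p := ENNReal.rpow_le_rpow h2 hp0.le
  -- dyadic sets
  set A : ℕ → Set (Rn n) := fun k => {x : Rn n | M * (2⁻¹:ℝ) ^ (k+1) < ‖g x‖} with hA
  set T : ℕ → Set (Rn n) := fun k => toMeasurable volume (A k) with hT
  set c : ℕ → ℝ≥0∞ := fun k => ENNReal.ofReal ((M * (2⁻¹:ℝ) ^ k) ^ p') with hc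
  -- pointwise bound
  have hpt : ∀ x, (‖g x‖₊ : ℝ≥0∞) ^ p' ≤
      ∑' k, Set.indicator (T k) (fun _ => c k) x := by
    intro x
    by_cases hg : g x = 0
    · simp [hg, ENNReal.zero_rpow_of_pos hp'0]
    · have ha0 : 0 < ‖g x‖ := norm_pos_iff.mpr hg
      have haM : ‖g x‖ ≤ M := hb x
      have hex : ∃ k : ℕ, M * (2⁻¹:ℝ) ^ (k+1) < ‖g x‖ := by
        obtain ⟨k, hk⟩ := exists_pow_lt_of_lt_one (div_pos ha0 hM0) (by norm_num : (2⁻¹:ℝ) < 1)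
        exact ⟨k, by
          rw [← lt_div_iff₀' hM0]
          calc (2⁻¹:ℝ) ^ (k+1) ≤ (2⁻¹:ℝ) ^ k := by
                exact pow_le_pow_of_le_one (by norm_num) (by norm_num) (Nat.le_succ k)
            _ < ‖g x‖ / M := hk⟩
      obtain ⟨k0, hk0p, hk0min⟩ : ∃ k, (M * (2⁻¹:ℝ) ^ (k+1) < ‖g x‖) ∧
          ∀ m, m < k → ¬(M * (2⁻¹:ℝ) ^ (m+1) < ‖g x‖) :=
        ⟨Nat.find hex, Nat.find_spec hex, fun m hm => Nat.find_min hex hm⟩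
      have hupper : ‖g x‖ ≤ M * (2⁻¹:ℝ) ^ k0 := by
        rcases Nat.eq_zero_or_pos k0 with h0 | h0
        · rw [h0]; simpa using haM
        · have := hk0min (k0 - 1) (by omega)
          push_neg at this
          calc ‖g x‖ ≤ M * (2⁻¹:ℝ) ^ (k0 - 1 + 1) := this
            _ = M * (2⁻¹:ℝ) ^ k0 := by rw [Nat.sub_add_cancel h0]
      have hmem : x ∈ T k0 := subset_toMeasurable _ _ hk0p
      calc (‖g x‖₊ : ℝ≥0∞) ^ p'
          = ENNReal.ofReal (‖g x‖ ^ p') := by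
            rw [← ENNReal.ofReal_coe_nnreal, coe_nnnorm, ENNReal.ofReal_rpow_of_nonneg (norm_nonneg _) hp'0.le]
        _ ≤ c k0 := ENNReal.ofReal_le_ofReal
            (Real.rpow_le_rpow (norm_nonneg _) hupper hp'0.le)
        _ = Set.indicator (T k0) (fun _ => c k0) x := by rw [Set.indicator_of_mem hmem]
        _ ≤ ∑' k, Set.indicator (T k) (fun _ => c k) x := ENNReal.le_tsum k0
  -- integrate
  have hint : ∫⁻ x, (‖g x‖₊ : ℝ≥0∞) ^ p' ≤ ∑' k, c k * volume (A k) := by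
    calc ∫⁻ x, (‖g x‖₊ : ℝ≥0∞) ^ p'
        ≤ ∫⁻ x, ∑' k, Set.indicator (T k) (fun _ => c k) x := lintegral_mono hpt
      _ = ∑' k, ∫⁻ x, Set.indicator (T k) (fun _ => c k) x := by
          refine lintegral_tsum fun k => ?_
          exact (measurable_const.indicator (measurableSet_toMeasurable _ _)).aemeasurable
      _ = ∑' k, c k * volume (T k) := by
          congr 1; funext k
          rw [lintegral_indicator_const (measurableSet_toMeasurable _ _)]
      _ = ∑' k, c k * volume (A k) := by
          congr 1; funext k
          rw [measure_toMeasurable]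
  -- geometric bound
  set ρr : ℝ := (2⁻¹:ℝ) ^ (p' - p) with hρr
  have hρr0 : 0 ≤ ρr := Real.rpow_nonneg (by norm_num) _
  have hρr1 : ρr < 1 := Real.rpow_lt_one (by norm_num) (by norm_num) (by linarith)
  set D : ℝ≥0∞ := ENNReal.ofReal (M ^ (p' - p) * (2:ℝ) ^ p) * C ^ p with hD
  have hterm : ∀ k : ℕ, c k * volume (A k) ≤ D * (ENNReal.ofReal ρr) ^ k := by
    intro k
    set u : ℝ := (2⁻¹:ℝ) ^ k with hu
    have hu0 : (0:ℝ) < u := pow_pos (by norm_num) k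
    set b : ℝ := M * (2⁻¹:ℝ) ^ (k+1) with hbk
    have hb0 : (0:ℝ) < b := by positivity
    have hbu : b = M * (u * 2⁻¹) := by rw [hbk, hu, pow_succ]
    -- volume bound with l = b.toNNReal
    have hco : ((b.toNNReal : NNReal) : ℝ) = b := Real.coe_toNNReal _ hb0.le
    have hvolA : volume (A k) ≤ (C / ENNReal.ofReal b) ^ p := by
      have := hvol b.toNNReal (by simp [Real.toNNReal_eq_zero, not_le, hb0])
      rw [hco] at this
      show volume {x : Rn n | b < ‖g x‖} ≤ (C / ENNReal.ofReal b) ^ p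
      simpa [ENNReal.ofReal] using this
    -- real algebra
    have hkey : (M * u) ^ p' = (M ^ (p' - p) * (2:ℝ) ^ p * ρr ^ k) * b ^ p := by
      have h1 : ρr ^ k = u ^ (p' - p) := by
        rw [hρr, hu, ← Real.rpow_natCast ((2⁻¹:ℝ) ^ (p' - p)) k,
          ← Real.rpow_mul (by norm_num), mul_comm (p' - p) (k:ℝ),
          Real.rpow_mul (by norm_num), Real.rpow_natCast]
      rw [hbu, Real.mul_rpow hM0.le hu0.le, Real.mul_rpow hM0.le (by positivity),
        Real.mul_rpow hu0.le (by norm_num), h1]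
      rw [Real.inv_rpow (by norm_num : (0:ℝ) ≤ 2)]
      have hM' : M ^ (p' - p) * M ^ p = M ^ p' := by
        rw [← Real.rpow_add hM0]; congr 1; ring
      have hu' : u ^ (p' - p) * u ^ p = u ^ p' := by
        rw [← Real.rpow_add hu0]; congr 1; ring
      have h2 : (2:ℝ) ^ p ≠ 0 := by positivity
      field_simp
      linear_combination (-(M ^ (p' - p) * M ^ p)) * hu' - u ^ p' * hM'
    have hbp : (0:ℝ) < b ^ p := Real.rpow_pos_of_pos hb0 p
    have hck : c k = ENNReal.ofReal ((M * u) ^ p') := by rw [hc, hu]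
    have hdiv : (M * u) ^ p' / b ^ p = M ^ (p' - p) * (2:ℝ) ^ p * ρr ^ k := by
      rw [hkey, mul_div_assoc, div_self hbp.ne', mul_one]
    calc c k * volume (A k)
        ≤ ENNReal.ofReal ((M * u) ^ p') * (C ^ p / ENNReal.ofReal (b ^ p)) := by
          rw [hck]
          gcongr
          calc volume (A k) ≤ (C / ENNReal.ofReal b) ^ p := hvolA
            _ = C ^ p / (ENNReal.ofReal b) ^ p := ENNReal.div_rpow_of_nonneg _ _ hp0.le
            _ = C ^ p / ENNReal.ofReal (b ^ p) := by
                rw [ENNReal.ofReal_rpow_of_pos hb0]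
      _ = C ^ p * (ENNReal.ofReal ((M * u) ^ p') / ENNReal.ofReal (b ^ p)) := by
          rw [ENNReal.div_eq_inv_mul, ENNReal.div_eq_inv_mul]; ring
      _ = C ^ p * ENNReal.ofReal ((M * u) ^ p' / b ^ p) := by
          rw [ENNReal.ofReal_div_of_pos hbp]
      _ = C ^ p * (ENNReal.ofReal (M ^ (p' - p) * (2:ℝ) ^ p) * (ENNReal.ofReal ρr) ^ k) := by
          rw [hdiv, ENNReal.ofReal_mul (by positivity), ENNReal.ofReal_pow hρr0]
      _ = D * (ENNReal.ofReal ρr) ^ k := by rw [hD]; ring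
  -- sum up
  have hsum : ∑' k, c k * volume (A k) ≤ D * (1 - ENNReal.ofReal ρr)⁻¹ := by
    calc ∑' k, c k * volume (A k) ≤ ∑' k, D * (ENNReal.ofReal ρr) ^ k :=
          ENNReal.tsum_le_tsum hterm
      _ = D * ∑' k, (ENNReal.ofReal ρr) ^ k := ENNReal.tsum_mul_left
      _ = D * (1 - ENNReal.ofReal ρr)⁻¹ := by rw [ENNReal.tsum_geometric]
  have hρlt : ENNReal.ofReal ρr < 1 := ENNReal.ofReal_lt_one.mpr hρr1
  have hfin : D * (1 - ENNReal.ofReal ρr)⁻¹ < ⊤ := by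
    apply ENNReal.mul_lt_top
    · rw [hD]
      exact ENNReal.mul_lt_top ENNReal.ofReal_lt_top
        (ENNReal.rpow_lt_top_of_nonneg hp0.le hC)
    · exact ENNReal.inv_lt_top.mpr (tsub_pos_of_lt hρlt)
  rw [eLpNorm_lt_top_iff_lintegral_rpow_enorm_lt_top
    (by simpa using (ENNReal.ofReal_pos.mpr hp'0).ne') ENNReal.ofReal_ne_top,
    ENNReal.toReal_ofReal hp'0.le]
  exact lt_of_le_of_lt (hint.trans hsum) hfin

/-- running maximum of `B`. -/
def cfun (B : ℕ → ℝ) : ℕ → ℝ := fun k => Nat.rec (B 0) (fun k ih => max ih (B (k+1))) k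

lemma cfun_le_succ (B : ℕ → ℝ) (k : ℕ) : cfun B k ≤ cfun B (k+1) := le_max_left _ _

lemma cfun_mono (B : ℕ → ℝ) : Monotone (cfun B) :=
  monotone_nat_of_le_succ (cfun_le_succ B)

lemma le_cfun (B : ℕ → ℝ) (k : ℕ) : B k ≤ cfun B k := by
  cases k with
  | zero => exact le_rfl
  | succ k => exact le_max_right _ _

lemma one_le_cfun {B : ℕ → ℝ} (hB : ∀ k, 1 ≤ B k) (k : ℕ) : 1 ≤ cfun B k :=
  (hB k).trans (le_cfun B k)

/-- piecewise linear interpolation of the running maximum. -/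
def mfun (B : ℕ → ℝ) (s : ℝ) : ℝ :=
  cfun B 0 + ∑ k ∈ Finset.range (⌈s⌉₊ + 1),
    (cfun B (k+1) - cfun B k) * min 1 (max 0 (s - (k:ℝ)))

lemma term_nonneg (B : ℕ → ℝ) (s : ℝ) (k : ℕ) :
    0 ≤ (cfun B (k+1) - cfun B k) * min 1 (max 0 (s - (k:ℝ))) :=
  mul_nonneg (sub_nonneg.mpr (cfun_le_succ B k)) (le_min zero_le_one (le_max_left 0 _))

lemma mfun_eq (B : ℕ → ℝ) (s : ℝ) {K : ℕ} (hK : ⌈s⌉₊ + 1 ≤ K) :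
    mfun B s = cfun B 0 + ∑ k ∈ Finset.range K,
      (cfun B (k+1) - cfun B k) * min 1 (max 0 (s - (k:ℝ))) := by
  unfold mfun
  congr 1
  refine Finset.sum_subset (Finset.range_subset_range.mpr hK) ?_
  intro k hk hk'
  have hk2 : ⌈s⌉₊ + 1 ≤ k + 1 := by
    rcases Finset.mem_range.not.mp hk' with h
    omega
  have hsk : s - (k:ℝ) ≤ 0 := by
    have h1 : s ≤ (⌈s⌉₊ : ℝ) := Nat.le_ceil s
    have h2 : (⌈s⌉₊ : ℝ) ≤ (k : ℝ) := by exact_mod_cast (by omega : ⌈s⌉₊ ≤ k)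
    linarith
  rw [max_eq_left hsk, min_eq_right zero_le_one, mul_zero]

lemma one_le_mfun {B : ℕ → ℝ} (hB : ∀ k, 1 ≤ B k) (s : ℝ) : 1 ≤ mfun B s := by
  unfold mfun
  have h1 := one_le_cfun hB 0
  have h2 : (0:ℝ) ≤ ∑ k ∈ Finset.range (⌈s⌉₊ + 1),
      (cfun B (k+1) - cfun B k) * min 1 (max 0 (s - (k:ℝ))) :=
    Finset.sum_nonneg fun k _ => term_nonneg B s k
  linarith

lemma cfun_floor_le_mfun (B : ℕ → ℝ) {s : ℝ} (hs : 0 ≤ s) :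
    cfun B ⌊s⌋₊ ≤ mfun B s := by
  have hsub : Finset.range ⌊s⌋₊ ⊆ Finset.range (⌈s⌉₊ + 1) :=
    Finset.range_subset_range.mpr (by have := Nat.floor_le_ceil s; omega)
  have key : ∑ k ∈ Finset.range ⌊s⌋₊, (cfun B (k+1) - cfun B k) * min 1 (max 0 (s - (k:ℝ)))
      ≤ ∑ k ∈ Finset.range (⌈s⌉₊ + 1), (cfun B (k+1) - cfun B k) * min 1 (max 0 (s - (k:ℝ))) :=
    Finset.sum_le_sum_of_subset_of_nonneg hsub fun k _ _ => term_nonneg B s k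
  have heval : ∀ k ∈ Finset.range ⌊s⌋₊,
      (cfun B (k+1) - cfun B k) * min 1 (max 0 (s - (k:ℝ))) = cfun B (k+1) - cfun B k := by
    intro k hk
    have hk1 : k + 1 ≤ ⌊s⌋₊ := Finset.mem_range.mp hk
    have hk' : (k:ℝ) + 1 ≤ s := by
      calc (k:ℝ) + 1 ≤ (⌊s⌋₊ : ℝ) := by exact_mod_cast hk1
        _ ≤ s := Nat.floor_le hs
    rw [max_eq_right (by linarith), min_eq_left (by linarith), mul_one]
  calc cfun B ⌊s⌋₊ = cfun B 0 + ∑ k ∈ Finset.range ⌊s⌋₊, (cfun B (k+1) - cfun B k) := by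
        rw [Finset.sum_range_sub (f := cfun B)]; ring
    _ = cfun B 0 + ∑ k ∈ Finset.range ⌊s⌋₊,
        (cfun B (k+1) - cfun B k) * min 1 (max 0 (s - (k:ℝ))) := by
        rw [Finset.sum_congr rfl heval]
    _ ≤ mfun B s := by unfold mfun; linarith
  
lemma mfun_continuousAt (B : ℕ → ℝ) {t : ℝ} (ht : 0 ≤ t) : ContinuousAt (mfun B) t := by
  set K := ⌈t⌉₊ + 2 with hK
  have hFcont : Continuous (fun s : ℝ => cfun B 0 + ∑ k ∈ Finset.range K,
      (cfun B (k+1) - cfun B k) * min 1 (max 0 (s - (k:ℝ)))) := by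
    refine continuous_const.add (continuous_finset_sum _ fun k _ => ?_)
    exact continuous_const.mul
      (continuous_const.min (continuous_const.max (continuous_id.sub continuous_const)))
  have hev : (fun s => mfun B s) =ᶠ[nhds t] (fun s : ℝ => cfun B 0 + ∑ k ∈ Finset.range K,
      (cfun B (k+1) - cfun B k) * min 1 (max 0 (s - (k:ℝ)))) := by
    filter_upwards [Metric.ball_mem_nhds t one_pos] with s hs
    have h1 : s ≤ t + 1 := by
      have := abs_lt.mp (by simpa [Real.dist_eq] using hs)
      linarith [this.1, this.2]
    have h2 : ⌈s⌉₊ ≤ ⌈t⌉₊ + 1 := by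
      calc ⌈s⌉₊ ≤ ⌈t + 1⌉₊ := Nat.ceil_le_ceil h1
        _ = ⌈t⌉₊ + 1 := by rw [Nat.ceil_add_one ht]
    exact mfun_eq B s (by omega)
  exact ContinuousAt.congr hFcont.continuousAt hev.symm

end Stmt5Aux

end

noncomputable section

open MeasureTheory Real Filter Topology ENNReal

/-- `BC([0,∞); Y^{p,∞}_{p'})` is dense in `BC([0,∞); L̃^{p,∞}(ℝⁿ))`. -/
theorem stmt5 (n : ℕ) (p p' : ℝ) (hp : 1 < p) (hpp : p < p')
    (f : ℝ → Rn n → ℝ)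
    (hf : BCOn (wk p) (Set.Ici 0) f)
    (htilde : ∀ s ∈ Set.Ici (0 : ℝ), MemTilde p (f s))
    (ε : ℝ) (hε : 0 < ε) :
    ∃ g : ℝ → Rn n → ℝ,
      BCOn (wk p) (Set.Ici 0) g ∧
      (∀ s ∈ Set.Ici (0 : ℝ), wk p (g s) < ⊤ ∧
        eLpNorm (g s) (ENNReal.ofReal p') volume < ⊤) ∧
      ∀ s ∈ Set.Ici (0 : ℝ), wk p (f s - g s) < ENNReal.ofReal ε := by
  classical
  obtain ⟨⟨C, hC, hCb⟩, hcont⟩ := hf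
  have hp0 : (0:ℝ) < p := lt_trans one_pos hp
  have hp1 : (1:ℝ) ≤ p := hp.le
  have hmul2 : ∀ x : ℝ, 0 ≤ x → (2:ℝ≥0∞) * ENNReal.ofReal x = ENNReal.ofReal (2*x) := by
    intro x hx
    rw [show (2:ℝ≥0∞) = ENNReal.ofReal 2 by norm_num, ← ENNReal.ofReal_mul (by norm_num)]
  -- Step A : pointwise-in-time truncation estimate
  have stepA : ∀ t ∈ Set.Ici (0:ℝ), ∃ Mt : ℝ, 1 ≤ Mt ∧ ∀ M, Mt ≤ M →
      wk p (fun x => f t x - Stmt5Aux.trunc M (f t x)) < ENNReal.ofReal (ε/8) := by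
    intro t ht
    obtain ⟨v, hv1, hv2, hv3⟩ := htilde t ht (ε/16) (by positivity)
    set K := (eLpNorm v ⊤ volume).toReal with hKdef
    have hK0 : 0 ≤ K := ENNReal.toReal_nonneg
    have hvK : ∀ᵐ x ∂(volume : Measure (Rn n)), ‖v x‖ ≤ K := by
      have htop : eLpNormEssSup v volume < ⊤ := by
        rwa [← eLpNorm_exponent_top]
      filter_upwards [ae_le_eLpNormEssSup (f := v) (μ := volume)] with x hx
      calc ‖v x‖ = ((‖v x‖₊ : ℝ≥0∞)).toReal := by simp
        _ ≤ (eLpNormEssSup v volume).toReal := ENNReal.toReal_mono htop.ne hx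
        _ = K := by rw [hKdef, eLpNorm_exponent_top]
    refine ⟨max 1 (2*K), le_max_left _ _, fun M hM => ?_⟩
    have hMK : 2*K ≤ M := le_trans (le_max_right _ _) hM
    have hptw : ∀ᵐ x ∂(volume : Measure (Rn n)),
        ‖f t x - Stmt5Aux.trunc M (f t x)‖ ≤ ((2:NNReal):ℝ) * ‖(f t - v) x‖ := by
      filter_upwards [hvK] with x hx
      have h2 := Stmt5Aux.sub_trunc_le_two_mul hK0 hMK
        (v := v x) (by rwa [← Real.norm_eq_abs]) (f t x)
      simpa [Real.norm_eq_abs, Pi.sub_apply] using h2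
    have hle : wk p (fun x => f t x - Stmt5Aux.trunc M (f t x)) ≤
        ((2:NNReal) : ℝ≥0∞) * wk p (f t - v) :=
      Stmt5Aux.wk_le_mul hp0.le 2 (by norm_num) hptw
    calc wk p (fun x => f t x - Stmt5Aux.trunc M (f t x))
        ≤ (2:ℝ≥0∞) * wk p (f t - v) := by simpa using hle
      _ < (2:ℝ≥0∞) * ENNReal.ofReal (ε/16) := by
          rw [ENNReal.mul_lt_mul_iff_right (by norm_num) (by norm_num)]
          exact hv3
      _ = ENNReal.ofReal (ε/8) := by rw [hmul2 _ (by positivity)]; congr 1; ring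
  -- Step B : neighborhood version
  have stepB : ∀ t : ℝ, ∃ Mt δt : ℝ, 1 ≤ Mt ∧ 0 < δt ∧ (t ∈ Set.Ici (0:ℝ) →
      ∀ s ∈ Set.Ici (0:ℝ), |s - t| < δt → ∀ M, Mt ≤ M →
      wk p (fun x => f s x - Stmt5Aux.trunc M (f s x)) < ENNReal.ofReal ε) := by
    intro t
    by_cases ht : t ∈ Set.Ici (0:ℝ)
    · obtain ⟨Mt, hMt1, hMtA⟩ := stepA t ht
      have hev : ∀ᶠ s in nhdsWithin t (Set.Ici 0),
          wk p (f s - f t) < ENNReal.ofReal (ε/100) :=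
        (hcont t ht).eventually_lt_const (ENNReal.ofReal_pos.mpr (by positivity))
      obtain ⟨δ, hδ0, hδ⟩ := Metric.mem_nhdsWithin_iff.mp hev
      refine ⟨Mt, δ, hMt1, hδ0, fun _ s hs hst M hM => ?_⟩
      have hsmall : wk p (f s - f t) < ENNReal.ofReal (ε/100) :=
        hδ ⟨by rwa [Metric.mem_ball, Real.dist_eq], hs⟩
      have hB := hMtA M hM
      have hdecomp : (fun x => f s x - Stmt5Aux.trunc M (f s x)) = fun x =>
          (f s x - f t x) + ((f t x - Stmt5Aux.trunc M (f t x)) +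
          (Stmt5Aux.trunc M (f t x) - Stmt5Aux.trunc M (f s x))) := by
        funext x; ring
      have hlip : wk p (fun x => Stmt5Aux.trunc M (f t x) - Stmt5Aux.trunc M (f s x)) ≤
          wk p (f s - f t) := by
        refine Stmt5Aux.wk_mono_ae hp0.le (ae_of_all _ fun x => ?_)
        simp only [Real.norm_eq_abs, Pi.sub_apply]
        rw [abs_sub_comm (f s x) (f t x)]
        exact Stmt5Aux.trunc_lipschitz _ _
      have hid : wk p (fun x => f s x - f t x) = wk p (f s - f t) := rfl
      have htri : wk p (fun x => f s x - Stmt5Aux.trunc M (f s x)) ≤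
          2 * (wk p (f s - f t) +
            2 * (wk p (fun x => f t x - Stmt5Aux.trunc M (f t x)) + wk p (f s - f t))) := by
        rw [hdecomp]
        refine le_trans (Stmt5Aux.wk_add_le hp1 _ _) ?_
        rw [hid]
        gcongr
        exact le_trans (Stmt5Aux.wk_add_le hp1 _ _) (by gcongr)
      refine lt_of_le_of_lt htri ?_
      have hstep : 2 * (wk p (f s - f t) +
            2 * (wk p (fun x => f t x - Stmt5Aux.trunc M (f t x)) + wk p (f s - f t)))
          ≤ 2 * (ENNReal.ofReal (ε/100) +
            2 * (ENNReal.ofReal (ε/8) + ENNReal.ofReal (ε/100))) := by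
        gcongr <;> first | exact hsmall.le | exact hB.le
      refine lt_of_le_of_lt hstep ?_
      rw [← ENNReal.ofReal_add (by positivity) (by positivity), hmul2 _ (by positivity),
        ← ENNReal.ofReal_add (by positivity) (by positivity), hmul2 _ (by positivity)]
      rw [ENNReal.ofReal_lt_ofReal_iff hε]
      linarith
    · exact ⟨1, 1, le_rfl, one_pos, fun h => absurd h ht⟩
  choose MT DT hMT1 hDT0 hprop using stepB
  -- Step C : uniform truncation level on [k, k+1]
  have stepC : ∀ k : ℕ, ∃ B : ℝ, 1 ≤ B ∧ ∀ s ∈ Set.Icc (k:ℝ) (k+1), ∀ M, B ≤ M →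
      wk p (fun x => f s x - Stmt5Aux.trunc M (f s x)) < ENNReal.ofReal ε := by
    intro k
    have hcomp : IsCompact (Set.Icc (k:ℝ) (k+1)) := isCompact_Icc
    set U : ℝ → Set ℝ := fun t => if t ∈ Set.Ici (0:ℝ) then Metric.ball t (DT t) else ∅
      with hU
    have hUopen : ∀ t, IsOpen (U t) := by
      intro t
      rw [hU]
      dsimp only
      split
      · exact Metric.isOpen_ball
      · exact isOpen_empty
    have hcover : Set.Icc (k:ℝ) (k+1) ⊆ ⋃ t : ℝ, U t := by
      intro s hs
      have hs0 : s ∈ Set.Ici (0:ℝ) := le_trans (Nat.cast_nonneg k) hs.1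
      refine Set.mem_iUnion.mpr ⟨s, ?_⟩
      rw [hU]
      simp only [hs0, if_pos]
      exact Metric.mem_ball_self (hDT0 s)
    obtain ⟨T, hT⟩ := hcomp.elim_finite_subcover U hUopen hcover
    refine ⟨1 + ∑ t ∈ T, max (MT t) 0,
      le_add_of_nonneg_right (Finset.sum_nonneg fun t _ => le_max_right _ _),
      fun s hs M hM => ?_⟩
    have hs0 : s ∈ Set.Ici (0:ℝ) := le_trans (Nat.cast_nonneg k) hs.1
    obtain ⟨t, htT, hst⟩ := Set.mem_iUnion₂.mp (hT hs)
    by_cases htI : t ∈ Set.Ici (0:ℝ)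
    · have hball : s ∈ Metric.ball t (DT t) := by
        rw [hU] at hst; simpa [htI] using hst
      have hMTle : MT t ≤ M := by
        have h1 : max (MT t) 0 ≤ ∑ t ∈ T, max (MT t) 0 :=
          Finset.single_le_sum (fun t _ => le_max_right (MT t) 0) htT
        have h2 : MT t ≤ max (MT t) 0 := le_max_left _ _
        linarith
      exact hprop t htI s hs0 (by rwa [Metric.mem_ball, Real.dist_eq] at hball) M hMTle
    · rw [hU] at hst; simp [htI] at hst
  choose Bf hBf1 hBf using stepC
  set Mf : ℝ → ℝ := Stmt5Aux.mfun Bf with hMf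
  have hMf1 : ∀ s, 1 ≤ Mf s := Stmt5Aux.one_le_mfun hBf1
  have hMf0 : ∀ s, 0 ≤ Mf s := fun s => le_trans zero_le_one (hMf1 s)
  set g : ℝ → Rn n → ℝ := fun s => fun x => Stmt5Aux.trunc (Mf s) (f s x) with hg
  have hwkg : ∀ s, wk p (g s) ≤ wk p (f s) := by
    intro s
    refine Stmt5Aux.wk_mono_ae hp0.le (ae_of_all _ fun x => ?_)
    simp only [Real.norm_eq_abs, hg]
    exact Stmt5Aux.abs_trunc_le_abs (hMf0 s) _
  -- the approximation property
  have happrox : ∀ s ∈ Set.Ici (0:ℝ), wk p (f s - g s) < ENNReal.ofReal ε := by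
    intro s hs
    have hs' : (0:ℝ) ≤ s := hs
    have hfloor : s ∈ Set.Icc ((⌊s⌋₊:ℕ):ℝ) ((⌊s⌋₊:ℕ)+1) :=
      ⟨Nat.floor_le hs', (Nat.lt_floor_add_one s).le⟩
    have hMge : Bf ⌊s⌋₊ ≤ Mf s :=
      le_trans (Stmt5Aux.le_cfun Bf ⌊s⌋₊) (Stmt5Aux.cfun_floor_le_mfun Bf hs')
    exact hBf ⌊s⌋₊ s hfloor (Mf s) hMge
  -- continuity bound
  have hub : ∀ t ∈ Set.Ici (0:ℝ), ∀ s, wk p (g s - g t) ≤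
      2 * (wk p (f s - f t) + ENNReal.ofReal (2*|Mf s - Mf t|) * C) := by
    intro t ht s
    have hdec : (g s - g t) = fun x =>
        (Stmt5Aux.trunc (Mf s) (f s x) - Stmt5Aux.trunc (Mf s) (f t x)) +
        (Stmt5Aux.trunc (Mf s) (f t x) - Stmt5Aux.trunc (Mf t) (f t x)) := by
      funext x
      simp only [Pi.sub_apply, hg]
      ring
    have h1 : wk p (fun x => Stmt5Aux.trunc (Mf s) (f s x) - Stmt5Aux.trunc (Mf s) (f t x)) ≤
        wk p (f s - f t) := by
      refine Stmt5Aux.wk_mono_ae hp0.le (ae_of_all _ fun x => ?_)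
      simp only [Real.norm_eq_abs, Pi.sub_apply]
      exact Stmt5Aux.trunc_lipschitz _ _
    have hvolC : (volume {x : Rn n | (1:ℝ) < ‖f t x‖}) ^ (1/p) ≤ C := by
      have h2 := Stmt5Aux.le_wk p (f t) 1
      simp only [ENNReal.coe_one, NNReal.coe_one, one_mul] at h2
      exact h2.trans (hCb t ht)
    have h3 : wk p (fun x => Stmt5Aux.trunc (Mf s) (f t x) - Stmt5Aux.trunc (Mf t) (f t x)) ≤
        ENNReal.ofReal (2*|Mf s - Mf t|) * C := by
      have hsupp : ∀ x, (Stmt5Aux.trunc (Mf s) (f t x) - Stmt5Aux.trunc (Mf t) (f t x)) ≠ 0 →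
          x ∈ {x : Rn n | (1:ℝ) < ‖f t x‖} := by
        intro x hx
        by_contra hmem
        simp only [Set.mem_setOf_eq, not_lt, Real.norm_eq_abs] at hmem
        exact hx (by
          rw [Stmt5Aux.trunc_eq_trunc (hmem.trans (hMf1 s)) (hmem.trans (hMf1 t))]
          ring)
      have hbd : ∀ x, ‖Stmt5Aux.trunc (Mf s) (f t x) - Stmt5Aux.trunc (Mf t) (f t x)‖ ≤
          2*|Mf s - Mf t| := by
        intro x
        rw [Real.norm_eq_abs]
        exact Stmt5Aux.trunc_diff_le _
      calc wk p (fun x => Stmt5Aux.trunc (Mf s) (f t x) - Stmt5Aux.trunc (Mf t) (f t x))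
          ≤ ENNReal.ofReal (2*|Mf s - Mf t|) * (volume {x : Rn n | (1:ℝ) < ‖f t x‖}) ^ (1/p) :=
            Stmt5Aux.wk_le_of_support hp0 (by positivity) hbd hsupp
        _ ≤ ENNReal.ofReal (2*|Mf s - Mf t|) * C := by gcongr
    calc wk p (g s - g t)
        ≤ 2 * (wk p (fun x => Stmt5Aux.trunc (Mf s) (f s x) - Stmt5Aux.trunc (Mf s) (f t x)) +
            wk p (fun x => Stmt5Aux.trunc (Mf s) (f t x) - Stmt5Aux.trunc (Mf t) (f t x))) := by
          rw [hdec]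
          exact Stmt5Aux.wk_add_le hp1 _ _
      _ ≤ 2 * (wk p (f s - f t) + ENNReal.ofReal (2*|Mf s - Mf t|) * C) := by gcongr
  refine ⟨g, ⟨⟨C, hC, fun t ht => (hwkg t).trans (hCb t ht)⟩, ?_⟩, fun s hs => ⟨?_, ?_⟩,
    happrox⟩
  · -- continuity of g
    intro t ht
    have h1 : Tendsto (fun s => wk p (f s - f t)) (nhdsWithin t (Set.Ici 0)) (nhds 0) :=
      hcont t ht
    have hMcont : Tendsto (fun s => 2*|Mf s - Mf t|) (nhds t) (nhds 0) := by
      have h2 : Tendsto Mf (nhds t) (nhds (Mf t)) := Stmt5Aux.mfun_continuousAt Bf ht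
      have h3 : Tendsto (fun s => 2*|Mf s - Mf t|) (nhds t) (nhds (2*|Mf t - Mf t|)) :=
        ((h2.sub tendsto_const_nhds).abs).const_mul 2
      simpa using h3
    have h4 : Tendsto (fun s => ENNReal.ofReal (2*|Mf s - Mf t|))
        (nhdsWithin t (Set.Ici 0)) (nhds 0) := by
      have := (((ENNReal.continuous_ofReal.tendsto 0).comp hMcont)).mono_left
        (nhdsWithin_le_nhds (s := Set.Ici (0:ℝ)))
      simpa [Function.comp_def] using this
    have h5 : Tendsto (fun s => ENNReal.ofReal (2*|Mf s - Mf t|) * C)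
        (nhdsWithin t (Set.Ici 0)) (nhds 0) := by
      have := ENNReal.Tendsto.mul_const h4 (Or.inr hC.ne)
      simpa using this
    have h6 : Tendsto (fun s => 2 * (wk p (f s - f t) + ENNReal.ofReal (2*|Mf s - Mf t|) * C))
        (nhdsWithin t (Set.Ici 0)) (nhds 0) := by
      have h7 := h1.add h5
      rw [add_zero] at h7
      have h8 := ENNReal.Tendsto.const_mul h7 (Or.inr (by norm_num : (2:ℝ≥0∞) ≠ ⊤))
      simpa using h8
    exact tendsto_of_tendsto_of_tendsto_of_le_of_le tendsto_const_nhds h6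
      (fun s => zero_le) (fun s => hub t ht s)
  · exact lt_of_le_of_lt ((hwkg s).trans (hCb s hs)) hC
  · exact Stmt5Aux.eLpNorm_interp hp hpp (hMf1 s)
      (fun x => by rw [Real.norm_eq_abs]; exact Stmt5Aux.abs_trunc_le (hMf0 s) _)
      hC.ne ((hwkg s).trans (hCb s hs))
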